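/- Let $l_1, \dots, l_k$ be positive integers with $L = l_1 + \cdots + l_k \geq 1$ and $l_k = \max_i l_i$. In the expansion of the product of probabilist's Hermite polynomials $h_{l_1}(z) \cdots h_{l_k}(z) = \sum_p c_p h_p(z)$ in the Hermite basis, every coefficient satisfies $|c_p| \leq (2L)^{L - l_k}$. -/

import Mathlib

open Polynomial
section AuxStmt12
open Finset

lemma derivative_hermite : ∀ n : ℕ, derivative (hermite n) = n • hermite (n - 1) := by
  have key : ∀ n : ℕ, derivative (hermite n) = n • hermite (n-1) ∧
      derivative (hermite (n+1)) = (n+1) • hermite n := by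
    intro n
    induction n with
    | zero =>
      constructor
      · simp [hermite_zero]
      · simp [hermite_one, hermite_zero]
    | succ m ih =>
      refine ⟨ih.2, ?_⟩
      have h2 : hermite (m+1) = X * hermite m - m • hermite (m-1) := by
        rw [hermite_succ m, ih.1]
      rw [hermite_succ (m+1), derivative_sub, derivative_mul, derivative_X, one_mul, ih.2,
        derivative_smul, ih.1, mul_smul_comm]
      rw [h2]
      module
  exact fun n => (key n).1

noncomputable def hrep (u : ℕ → ℤ) (M : ℕ) : Polynomial ℤ :=
  ∑ p ∈ Finset.range M, u p • hermite p

def hstep (u : ℕ → ℤ) : ℕ → ℤ :=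
  fun q => (if q = 0 then 0 else u (q-1)) + (q+1) * u (q+1)

lemma hrep_mono (u : ℕ → ℤ) {M M' : ℕ} (h : M ≤ M') (hu : ∀ p, M ≤ p → u p = 0) :
    hrep u M' = hrep u M := by
  unfold hrep
  rw [← Finset.sum_range_add_sum_Ico _ h]
  have : ∑ p ∈ Finset.Ico M M', u p • hermite p = 0 := by
    apply Finset.sum_eq_zero
    intro p hp
    rw [hu p (Finset.mem_Ico.1 hp).1, zero_smul]
  rw [this, add_zero]

lemma X_mul_hermite (p : ℕ) : X * hermite p = hermite (p+1) + (p : ℤ) • hermite (p-1) := by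
  cases p with
  | zero => simp [hermite_zero, hermite_one]
  | succ m =>
    rw [hermite_succ (m+1), derivative_hermite (m+1)]
    simp only [Nat.add_sub_cancel, natCast_zsmul]
    abel

lemma hrep_X_mul {u : ℕ → ℤ} {M : ℕ} (hu : ∀ p, M ≤ p → u p = 0) :
    X * hrep u M = hrep (hstep u) (M+1) := by
  unfold hrep
  rw [Finset.mul_sum]
  have lhs_eq : ∀ p ∈ Finset.range M, X * u p • hermite p
      = u p • hermite (p+1) + (p * u p) • hermite (p-1) := by
    intro p _
    rw [mul_smul_comm, X_mul_hermite, smul_add, smul_smul, mul_comm (u p) (p:ℤ)]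
  rw [Finset.sum_congr rfl lhs_eq, Finset.sum_add_distrib]
  have rhs : ∀ q ∈ Finset.range (M+1), hstep u q • hermite q
      = (if q = 0 then 0 else u (q-1)) • hermite q + ((q+1 : ℤ) * u (q+1)) • hermite q := by
    intro q _
    unfold hstep
    rw [← add_smul]
  rw [Finset.sum_congr rfl rhs, Finset.sum_add_distrib]
  congr 1
  · rw [Finset.sum_range_succ' (fun q => (if q = 0 then 0 else u (q-1)) • hermite q) M]
    simp
  · -- ∑ p ∈ range M, (p * u p) • hermite (p-1) = ∑ q ∈ range (M+1), ((q+1)*u (q+1)) • hermite q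
    rw [Finset.sum_range_succ]
    rw [hu (M+1) (by omega), mul_zero, zero_smul, add_zero]
    cases M with
    | zero => simp
    | succ n =>
      rw [Finset.sum_range_succ' (fun p => ((p:ℤ) * u p) • hermite (p-1)) n]
      rw [Finset.sum_range_succ]
      rw [hu (n+1) (by omega), mul_zero, zero_smul, add_zero]
      push_cast
      simp
def huseq (u : ℕ → ℤ) : ℕ → (ℕ → ℤ)
  | 0 => u
  | 1 => hstep u
  | (a+2) => fun p => hstep (huseq u (a+1)) p - (a+1) * huseq u a p

lemma hstep_vanish {u : ℕ → ℤ} {M : ℕ} (hu : ∀ p, M ≤ p → u p = 0) :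
    ∀ p, M + 1 ≤ p → hstep u p = 0 := by
  intro p hp
  unfold hstep
  rw [if_neg (by omega), hu (p-1) (by omega), hu (p+1) (by omega), mul_zero, add_zero]

lemma hermite_two_step (a : ℕ) :
    hermite (a+2) = X * hermite (a+1) - ((a:ℤ)+1) • hermite a := by
  rw [hermite_succ (a+1), derivative_hermite (a+1)]
  simp only [Nat.add_sub_cancel, natCast_zsmul]
  module

lemma hrep_smul (z : ℤ) (u : ℕ → ℤ) (M : ℕ) :
    z • hrep u M = hrep (fun p => z * u p) M := by
  unfold hrep
  rw [Finset.smul_sum]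
  exact Finset.sum_congr rfl fun p _ => by rw [smul_smul]

lemma hrep_sub (u v : ℕ → ℤ) (M : ℕ) :
    hrep u M - hrep v M = hrep (fun p => u p - v p) M := by
  unfold hrep
  rw [← Finset.sum_sub_distrib]
  exact Finset.sum_congr rfl fun p _ => by rw [← sub_smul]

lemma huseq_main {u : ℕ → ℤ} {M : ℕ} (hu : ∀ p, M ≤ p → u p = 0) :
    ∀ a : ℕ, (∀ p, M + a ≤ p → huseq u a p = 0) ∧
      hermite a * hrep u M = hrep (huseq u a) (M + a) := by
  have key : ∀ a : ℕ,
      ((∀ p, M + a ≤ p → huseq u a p = 0) ∧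
        hermite a * hrep u M = hrep (huseq u a) (M + a)) ∧
      ((∀ p, M + (a+1) ≤ p → huseq u (a+1) p = 0) ∧
        hermite (a+1) * hrep u M = hrep (huseq u (a+1)) (M + (a+1))) := by
    intro a
    induction a with
    | zero =>
      refine ⟨⟨by simpa [huseq] using hu, by simp [huseq, hermite_zero]⟩, ?_, ?_⟩
      · intro p hp; exact hstep_vanish hu p (by omega)
      · show hermite 1 * hrep u M = hrep (hstep u) (M + 1)
        rw [hermite_one, hrep_X_mul hu]
    | succ m ih =>
      refine ⟨ih.2, ?_, ?_⟩
      · intro p hp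
        show hstep (huseq u (m+1)) p - (m+1) * huseq u m p = 0
        rw [hstep_vanish ih.2.1 p (by omega), ih.1.1 p (by omega), mul_zero, sub_zero]
      · rw [hermite_two_step m, sub_mul, mul_assoc, ih.2.2, smul_mul_assoc, ih.1.2,
          hrep_X_mul ih.2.1, hrep_smul,
          ← hrep_mono (fun p => ((m:ℤ)+1) * huseq u m p) (M := M + m) (M' := M + (m+1+1))
            (by omega) (fun p hp => by show ((m:ℤ)+1) * huseq u m p = 0; rw [ih.1.1 p hp, mul_zero]),
          show M + (m + 1) + 1 = M + (m + 1 + 1) by omega, hrep_sub]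
        rfl
  exact fun a => (key a).1

lemma huseq_bound {u : ℕ → ℤ} {M : ℕ} {B : ℤ} (hB : 0 ≤ B)
    (hu : ∀ p, M ≤ p → u p = 0) (hb : ∀ p, |u p| ≤ B) :
    ∀ a : ℕ, ∀ p, |huseq u a p| ≤ B * ((M : ℤ) + 2*a)^a := by
  have vanish : ∀ a : ℕ, ∀ p, M + a ≤ p → huseq u a p = 0 := by
    intro a
    exact (huseq_main hu a).1
  have key : ∀ a : ℕ, (∀ p, |huseq u a p| ≤ B * ((M : ℤ) + 2*a)^a) ∧
      (∀ p, |huseq u (a+1) p| ≤ B * ((M : ℤ) + 2*(a+1 : ℕ))^(a+1)) := by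
    intro a
    induction a with
    | zero =>
      refine ⟨by simpa [huseq] using hb, ?_⟩
      intro p
      show |hstep u p| ≤ B * ((M:ℤ) + 2*(1:ℕ))^1
      have h1 : |(if p = 0 then (0:ℤ) else u (p-1))| ≤ B := by
        split
        · simpa using hB
        · exact hb _
      have h2 : |((p:ℤ)+1) * u (p+1)| ≤ (M:ℤ) * B := by
        rcases le_or_gt M (p+1) with h | h
        · rw [hu (p+1) h, mul_zero, abs_zero]
          positivity
        · rw [abs_mul]
          apply mul_le_mul _ (hb _) (abs_nonneg _) (by positivity)
          rw [abs_of_nonneg (by positivity)]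
          have hle : p + 1 ≤ M := by omega
          have : (p:ℤ) + 1 ≤ M := by exact_mod_cast hle
          linarith
      calc |hstep u p| ≤ |(if p = 0 then (0:ℤ) else u (p-1))| + |((p:ℤ)+1) * u (p+1)| :=
            abs_add_le _ _
        _ ≤ B + (M:ℤ) * B := add_le_add h1 h2
        _ ≤ B * ((M:ℤ) + 2*(1:ℕ))^1 := by push_cast; nlinarith
    | succ m ih =>
      refine ⟨ih.2, ?_⟩
      intro p
      set X : ℤ := (M:ℤ) + 2*(m+2) with hX
      have hXnn : (0:ℤ) ≤ X := by positivity
      set β₁ : ℤ := B * ((M:ℤ) + 2*((m:ℕ)+1 : ℕ))^(m+1) with hβ₁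
      set β₀ : ℤ := B * ((M:ℤ) + 2*(m:ℕ))^m with hβ₀
      have hβ₁nn : 0 ≤ β₁ := by rw [hβ₁]; positivity
      have hβ₀nn : 0 ≤ β₀ := by rw [hβ₀]; positivity
      have hstep_bd : |hstep (huseq u (m+1)) p| ≤ ((M:ℤ) + m + 1) * β₁ := by
        have h1 : |(if p = 0 then (0:ℤ) else huseq u (m+1) (p-1))| ≤ β₁ := by
          split
          · simpa using hβ₁nn
          · exact ih.2 _
        have h2 : |((p:ℤ)+1) * huseq u (m+1) (p+1)| ≤ ((M:ℤ) + m) * β₁ := by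
          rcases le_or_gt (M + (m+1)) (p+1) with h | h
          · rw [vanish (m+1) (p+1) h, mul_zero, abs_zero]
            positivity
          · rw [abs_mul]
            apply mul_le_mul _ (ih.2 _) (abs_nonneg _) (by positivity)
            rw [abs_of_nonneg (by positivity)]
            have hle : p + 1 ≤ M + m := by omega
            have : (p:ℤ) + 1 ≤ (M:ℤ) + m := by exact_mod_cast hle
            linarith
        calc |hstep (huseq u (m+1)) p|
            ≤ |(if p = 0 then (0:ℤ) else huseq u (m+1) (p-1))|
              + |((p:ℤ)+1) * huseq u (m+1) (p+1)| := abs_add_le _ _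
          _ ≤ β₁ + ((M:ℤ) + m) * β₁ := add_le_add h1 h2
          _ = ((M:ℤ) + m + 1) * β₁ := by ring
      have old_bd : |((m:ℤ)+1) * huseq u m p| ≤ ((m:ℤ)+1) * β₀ := by
        rw [abs_mul, abs_of_nonneg (by positivity)]
        exact mul_le_mul_of_nonneg_left (ih.1 _) (by positivity)
      have total : |huseq u (m+2) p| ≤ ((M:ℤ) + m + 1) * β₁ + ((m:ℤ)+1) * β₀ := by
        show |hstep (huseq u (m+1)) p - ((m:ℤ)+1) * huseq u m p| ≤ _
        calc |hstep (huseq u (m+1)) p - ((m:ℤ)+1) * huseq u m p|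
            ≤ |hstep (huseq u (m+1)) p| + |((m:ℤ)+1) * huseq u m p| := abs_sub _ _
          _ ≤ _ := add_le_add hstep_bd old_bd
      have e1 : β₁ ≤ B * X^(m+1) := by
        rw [hβ₁, hX]
        apply mul_le_mul_of_nonneg_left _ hB
        apply pow_le_pow_left₀ (by positivity) (by push_cast; linarith)
      have e0 : β₀ ≤ B * X^(m+1) := by
        rw [hβ₀, hX]
        apply mul_le_mul_of_nonneg_left _ hB
        calc ((M:ℤ) + 2*(m:ℕ))^m ≤ ((M:ℤ) + 2*((m:ℕ)+2))^m :=
              pow_le_pow_left₀ (by positivity) (by push_cast; linarith) m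
          _ ≤ ((M:ℤ) + 2*((m:ℕ)+2))^(m+1) :=
              pow_le_pow_right₀ (by push_cast; linarith) (by omega)
      have goal_eq : B * ((M:ℤ) + 2*((m:ℕ)+1+1 : ℕ))^(m+1+1) = X * (B * X^(m+1)) := by
        rw [hX]; push_cast; ring
      show |huseq u (m+2) p| ≤ B * ((M:ℤ) + 2*((m:ℕ)+1+1 : ℕ))^(m+1+1)
      rw [goal_eq]
      refine total.trans ?_
      calc ((M:ℤ) + m + 1) * β₁ + ((m:ℤ)+1) * β₀
          ≤ ((M:ℤ) + m + 1) * (B * X^(m+1)) + ((m:ℤ)+1) * (B * X^(m+1)) :=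
            add_le_add (mul_le_mul_of_nonneg_left e1 (by positivity))
              (mul_le_mul_of_nonneg_left e0 (by positivity))
        _ = ((M:ℤ) + 2*m + 2) * (B * X^(m+1)) := by ring
        _ ≤ X * (B * X^(m+1)) := by
            apply mul_le_mul_of_nonneg_right _ (by positivity)
            rw [hX]; push_cast; linarith
  intro a
  have := (key a).1
  intro p
  exact this p

lemma hrep_unique : ∀ (N : ℕ) (e : ℕ → ℤ), hrep e N = 0 → ∀ p, p < N → e p = 0 := by
  intro N
  induction N with
  | zero => intro e _ p hp; omega
  | succ n ih =>
    intro e he p hp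
    have hzero : ∀ q ∈ Finset.range n, (e q • hermite q).coeff n = 0 := by
      intro q hq
      rw [Polynomial.coeff_smul, coeff_hermite_of_lt (Finset.mem_range.1 hq), smul_zero]
    have hcoeff : (hrep e (n+1)).coeff n = e n := by
      unfold hrep
      rw [Finset.sum_range_succ, Polynomial.coeff_add, Polynomial.coeff_smul,
        coeff_hermite_self, smul_eq_mul, mul_one, Polynomial.finset_sum_coeff,
        Finset.sum_eq_zero hzero, zero_add]
    have hen : e n = 0 := by rw [← hcoeff, he, Polynomial.coeff_zero]
    have hrest : hrep e n = 0 := by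
      unfold hrep at he ⊢
      rw [Finset.sum_range_succ, hen, zero_smul, add_zero] at he
      exact he
    rcases Nat.lt_or_ge p n with h | h
    · exact ih e hrest p h
    · have : p = n := by omega
      rw [this, hen]

lemma hermite_prod_expansion {k : ℕ} (l : Fin k → ℕ) (m T : ℕ) (s : Finset (Fin k))
    (hcond : ∀ i ∈ s, m + (∑ j ∈ s, l j) + 1 + l i ≤ 2*T) :
    ∃ u : ℕ → ℤ,
      (hermite m * ∏ i ∈ s, hermite (l i) = hrep u (m + (∑ j ∈ s, l j) + 1)) ∧
      (∀ p, m + (∑ j ∈ s, l j) + 1 ≤ p → u p = 0) ∧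
      (∀ p, |u p| ≤ (2*(T:ℤ))^(∑ j ∈ s, l j)) := by
  induction s using Finset.induction_on with
  | empty =>
    refine ⟨fun p => if p = m then 1 else 0, ?_, ?_, ?_⟩
    · rw [Finset.prod_empty, mul_one]
      unfold hrep
      simp [ite_smul]
    · intro p hp
      simp only [Finset.sum_empty] at hp
      show (if p = m then (1:ℤ) else 0) = 0
      rw [if_neg (by omega)]
    · intro p
      simp only [Finset.sum_empty, pow_zero]
      split <;> simp
  | @insert i s his ih =>
    have hsum : ∑ j ∈ insert i s, l j = l i + ∑ j ∈ s, l j := Finset.sum_insert his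
    have hcond' : ∀ j ∈ s, m + (∑ j ∈ s, l j) + 1 + l j ≤ 2*T := by
      intro j hj
      have := hcond j (Finset.mem_insert_of_mem hj)
      rw [hsum] at this
      omega
    obtain ⟨u, hrepr, hvan, hbd⟩ := ih hcond'
    set M := m + (∑ j ∈ s, l j) + 1 with hM
    set a := l i with ha
    refine ⟨huseq u a, ?_, ?_, ?_⟩
    · rw [Finset.prod_insert his, show hermite m * (hermite a * ∏ j ∈ s, hermite (l j))
        = hermite a * (hermite m * ∏ j ∈ s, hermite (l j)) by ring, hrepr,
        (huseq_main hvan a).2, hsum]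
      congr 1
      omega
    · intro p hp
      apply (huseq_main hvan a).1
      rw [hsum] at hp
      omega
    · intro p
      have h1 := huseq_bound (by positivity) hvan hbd a p
      refine h1.trans ?_
      have h2 : ((M:ℤ) + 2*a)^a ≤ (2*(T:ℤ))^a := by
        apply pow_le_pow_left₀ (by positivity)
        have := hcond i (Finset.mem_insert_self i s)
        rw [hsum] at this
        push_cast [hM]
        have : (m + (∑ j ∈ s, l j) + 1 + 2 * a : ℕ) ≤ 2*T := by omega
        exact_mod_cast this
      calc (2*(T:ℤ))^(∑ j ∈ s, l j) * ((M:ℤ) + 2*a)^a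
          ≤ (2*(T:ℤ))^(∑ j ∈ s, l j) * (2*(T:ℤ))^a :=
            mul_le_mul_of_nonneg_left h2 (by positivity)
        _ = (2*(T:ℤ))^(∑ j ∈ insert i s, l j) := by rw [← pow_add, hsum]; ring_nf

end AuxStmt12

/-- The coefficients in the Hermite-basis expansion of a product of Hermite polynomials
`h_{l₁} ⋯ h_{l_k}` are bounded in magnitude by `(2L)^{L - l_max}`, where `L = ∑ lᵢ`. -/
theorem stmt_12 (k : ℕ) (l : Fin k → ℕ) (hl : ∀ i, 1 ≤ l i)
    (L : ℕ) (hLdef : L = ∑ i, l i) (hL : 1 ≤ L)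
    (lmax : ℕ) (hmax : ∀ i, l i ≤ lmax) (hmem : ∃ i, l i = lmax)
    (c : ℕ → ℤ)
    (hexp : (∏ i, Polynomial.hermite (l i)) =
      ∑ p ∈ Finset.range (L + 1), Polynomial.C (c p) * Polynomial.hermite p) :
    ∀ p ≤ L, |c p| ≤ ((2 * L) ^ (L - lmax) : ℤ) := by
  obtain ⟨i0, hi0⟩ := hmem
  have hml : 1 ≤ lmax := hi0 ▸ hl i0
  set s : Finset (Fin k) := Finset.univ.erase i0 with hs
  have hsplit : lmax + ∑ j ∈ s, l j = L := by
    rw [hLdef, ← hi0, hs]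
    exact Finset.add_sum_erase _ _ (Finset.mem_univ i0)
  have hSle : ∀ i ∈ s, l i ≤ ∑ j ∈ s, l j :=
    fun i hi => Finset.single_le_sum (fun j _ => Nat.zero_le (l j)) hi
  have hcond : ∀ i ∈ s, lmax + (∑ j ∈ s, l j) + 1 + l i ≤ 2*L := by
    intro i hi
    have := hSle i hi
    omega
  obtain ⟨u, hrepr, hvan, hbd⟩ := hermite_prod_expansion l lmax L s hcond
  have hprod : (∏ i, hermite (l i)) = hrep u (L + 1) := by
    rw [← Finset.mul_prod_erase Finset.univ (fun i => hermite (l i)) (Finset.mem_univ i0),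
      hi0, ← hs, hrepr]
    congr 1
    omega
  have hc : (∏ i, hermite (l i)) = hrep c (L + 1) := by
    rw [hexp]
    unfold hrep
    exact Finset.sum_congr rfl fun p _ => (Polynomial.smul_eq_C_mul (c p)).symm
  have hdiff : hrep (fun p => c p - u p) (L + 1) = 0 := by
    rw [← hrep_sub, ← hc, ← hprod, sub_self]
  have heq : ∀ p, p ≤ L → c p = u p := by
    intro p hp
    have := hrep_unique (L+1) _ hdiff p (by omega)
    simpa [sub_eq_zero] using this
  intro p hp
  rw [heq p hp]
  have := hbd p
  have hexpeq : ∑ j ∈ s, l j = L - lmax := by omega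
  rw [hexpeq] at this
  calc |u p| ≤ (2*(L:ℤ))^(L - lmax) := this
    _ = ((2 * L) ^ (L - lmax) : ℤ) := by push_cast; ring
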